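/- For every real number x ≥ 1, one has Γ(1+x)^{2/x} ≥ (1/e²)(x+1)(x+2), where Γ denotes the Euler Gamma function. -/

import Mathlib

open Real

/-! Auxiliary numeric bounds on logarithms via the Taylor series of `log (1-x)`. -/

private lemma nlog_bounds {a : ℝ} (h0 : 0 ≤ a) (h1 : a < 1) :
    a + a^2/2 + a^3/3 - a^4/(1-a) ≤ Real.log (1-a)⁻¹ ∧
      Real.log (1-a)⁻¹ ≤ a + a^2/2 + a^3/3 + a^4/(1-a) := by
  have habs : |a| < 1 := by rwa [abs_of_nonneg h0]
  have h := Real.abs_log_sub_add_sum_range_le habs 3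
  rw [abs_le] at h
  obtain ⟨hl, hr⟩ := h
  rw [Real.log_inv]
  rw [abs_of_nonneg h0] at hl hr
  simp only [Finset.sum_range_succ, Finset.sum_range_zero] at hl hr
  constructor <;> [skip; skip] <;> push_cast at hl hr ⊢ <;> linarith

private lemma log_tangent {y c : ℝ} (hc : 0 < c) (hy : 0 < y) :
    Real.log y ≤ Real.log c + (y - c)/c := by
  have h := Real.log_le_sub_one_of_pos (show (0:ℝ) < y/c by positivity)
  rw [Real.log_div hy.ne' hc.ne'] at h
  have : y/c - 1 = (y-c)/c := by field_simp
  linarith [this ▸ h]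

private lemma l3_bounds : 1.09850563 ≤ Real.log 3 ∧ Real.log 3 ≤ 1.09867711 := by
  have h := nlog_bounds (a := 1/9) (by norm_num) (by norm_num)
  rw [show ((1:ℝ) - 1/9)⁻¹ = 9/8 by norm_num] at h
  have h2l : (0.6931471803:ℝ) < Real.log 2 := Real.log_two_gt_d9
  have h2r : Real.log 2 < 0.6931471808 := Real.log_two_lt_d9
  have e : Real.log (9/8) = 2 * Real.log 3 - 3 * Real.log 2 := by
    rw [show (9/8:ℝ) = 3^2/2^3 by norm_num, Real.log_div (by norm_num) (by norm_num),
      Real.log_pow, Real.log_pow]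
    push_cast; ring
  rw [e] at h
  constructor <;> nlinarith [h.1, h.2]

private lemma lpi_bounds : 1.1446176 ≤ Real.log π ∧ Real.log π ≤ 1.1447981 := by
  obtain ⟨h3l, h3r⟩ := l3_bounds
  have hπl : (3.141592:ℝ) < π := Real.pi_gt_d6
  have hπr : π < 3.141593 := Real.pi_lt_d6
  constructor
  · have h := (nlog_bounds (a := 141592/3141592) (by norm_num) (by norm_num)).1
    have e : ((1:ℝ) - 141592/3141592)⁻¹ = 3.141592/3 := by norm_num
    rw [e] at h
    have e2 : Real.log (3.141592/3) = Real.log 3.141592 - Real.log 3 :=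
      Real.log_div (by norm_num) (by norm_num)
    have mono : Real.log 3.141592 ≤ Real.log π :=
      Real.log_le_log (by norm_num) hπl.le
    rw [e2] at h
    nlinarith [h, mono]
  · have h := (nlog_bounds (a := 141593/3141593) (by norm_num) (by norm_num)).2
    have e : ((1:ℝ) - 141593/3141593)⁻¹ = 3.141593/3 := by norm_num
    rw [e] at h
    have e2 : Real.log (3.141593/3) = Real.log 3.141593 - Real.log 3 :=
      Real.log_div (by norm_num) (by norm_num)
    have mono : Real.log π ≤ Real.log 3.141593 :=
      Real.log_le_log Real.pi_pos hπr.le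
    rw [e2] at h
    nlinarith [h, mono]

private lemma l178_bounds : 0.7537559 ≤ Real.log (17/8 : ℝ) ∧ Real.log (17/8 : ℝ) ≤ 0.7537814 := by
  have h := nlog_bounds (a := 1/17) (by norm_num) (by norm_num)
  rw [show ((1:ℝ) - 1/17)⁻¹ = 17/16 by norm_num] at h
  have e : Real.log (17/8 : ℝ) = Real.log 2 + Real.log (17/16) := by
    rw [← Real.log_mul (by norm_num) (by norm_num)]; norm_num
  have h2l : (0.6931471803:ℝ) < Real.log 2 := Real.log_two_gt_d9
  have h2r : Real.log 2 < 0.6931471808 := Real.log_two_lt_d9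
  rw [e]; constructor <;> nlinarith [h.1, h.2]

private lemma l258_bounds : 1.1393242 ≤ Real.log (25/8 : ℝ) ∧ Real.log (25/8 : ℝ) ≤ 1.1395012 := by
  have h := nlog_bounds (a := 1/25) (by norm_num) (by norm_num)
  rw [show ((1:ℝ) - 1/25)⁻¹ = 25/24 by norm_num] at h
  have e : Real.log (25/8 : ℝ) = Real.log 3 + Real.log (25/24) := by
    rw [← Real.log_mul (by norm_num) (by norm_num)]; norm_num
  obtain ⟨h3l, h3r⟩ := l3_bounds
  rw [e]; constructor <;> nlinarith [h.1, h.2]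

private lemma l198_bounds : 0.8647740 ≤ Real.log (19/8 : ℝ) ∧ Real.log (19/8 : ℝ) ≤ 0.8651332 := by
  have h := nlog_bounds (a := 1/19) (by norm_num) (by norm_num)
  rw [show ((1:ℝ) - 1/19)⁻¹ = 19/18 by norm_num] at h
  have e : Real.log (19/8 : ℝ) = 2 * Real.log 3 - 2 * Real.log 2 + Real.log (19/18) := by
    rw [show (19/8:ℝ) = 3^2 * (19/18) / 2^2 by norm_num,
      Real.log_div (by positivity) (by norm_num),
      Real.log_mul (by norm_num) (by norm_num), Real.log_pow, Real.log_pow]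
    push_cast; ring
  obtain ⟨h3l, h3r⟩ := l3_bounds
  have h2l : (0.6931471803:ℝ) < Real.log 2 := Real.log_two_gt_d9
  have h2r : Real.log 2 < 0.6931471808 := Real.log_two_lt_d9
  rw [e]; constructor <;> nlinarith [h.1, h.2]

private lemma l278_bounds : 1.2160753 ≤ Real.log (27/8 : ℝ) ∧ Real.log (27/8 : ℝ) ≤ 1.2165898 := by
  have e : Real.log (27/8 : ℝ) = 3 * Real.log 3 - 3 * Real.log 2 := by
    rw [show (27/8:ℝ) = 3^3/2^3 by norm_num, Real.log_div (by norm_num) (by norm_num),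
      Real.log_pow, Real.log_pow]
    push_cast; ring
  obtain ⟨h3l, h3r⟩ := l3_bounds
  have h2l : (0.6931471803:ℝ) < Real.log 2 := Real.log_two_gt_d9
  have h2r : Real.log 2 < 0.6931471808 := Real.log_two_lt_d9
  rw [e]; constructor <;> nlinarith

private lemma l114_bounds : 1.0114545 ≤ Real.log (11/4 : ℝ) ∧ Real.log (11/4 : ℝ) ≤ 1.0117313 := by
  have h := nlog_bounds (a := 1/12) (by norm_num) (by norm_num)
  rw [show ((1:ℝ) - 1/12)⁻¹ = 12/11 by norm_num] at h
  have e : Real.log (11/4 : ℝ) = Real.log 3 - Real.log (12/11) := by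
    rw [← Real.log_div (by norm_num) (by norm_num)]; norm_num
  obtain ⟨h3l, h3r⟩ := l3_bounds
  rw [e]; constructor <;> nlinarith [h.1, h.2]

private lemma l154_bounds : 1.3217435 ≤ Real.log (15/4 : ℝ) ∧ Real.log (15/4 : ℝ) ≤ 1.3217762 := by
  have h := nlog_bounds (a := 1/16) (by norm_num) (by norm_num)
  rw [show ((1:ℝ) - 1/16)⁻¹ = 16/15 by norm_num] at h
  have e : Real.log (15/4 : ℝ) = 2 * Real.log 2 - Real.log (16/15) := by
    rw [show (15/4:ℝ) = 2^2/(16/15) by norm_num, Real.log_div (by norm_num) (by norm_num),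
      Real.log_pow]
    push_cast; ring
  have h2l : (0.6931471803:ℝ) < Real.log 2 := Real.log_two_gt_d9
  have h2r : Real.log 2 < 0.6931471808 := Real.log_two_lt_d9
  rw [e]; constructor <;> nlinarith [h.1, h.2]

/-! Gamma values at half integers. -/

private lemma log_gamma_32 : Real.log (Real.Gamma (3/2)) = (1/2) * Real.log π - Real.log 2 := by
  have e : Real.Gamma (3/2 : ℝ) = Real.sqrt π / 2 := by
    rw [show (3/2:ℝ) = 1/2 + 1 by norm_num, Real.Gamma_add_one (by norm_num),
      Real.Gamma_one_half_eq]
    ring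
  rw [e, Real.log_div (by positivity) (by norm_num), Real.log_sqrt Real.pi_pos.le]
  ring

private lemma log_gamma_52 :
    Real.log (Real.Gamma (5/2)) = Real.log 3 + (1/2) * Real.log π - 2 * Real.log 2 := by
  have e : Real.Gamma (5/2 : ℝ) = 3/4 * Real.sqrt π := by
    rw [show (5/2:ℝ) = 3/2 + 1 by norm_num, Real.Gamma_add_one (by norm_num),
      show (3/2:ℝ) = 1/2 + 1 by norm_num, Real.Gamma_add_one (by norm_num),
      Real.Gamma_one_half_eq]
    ring
  rw [e, Real.log_mul (by norm_num) (by positivity), Real.log_sqrt Real.pi_pos.le,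
    show (3/4:ℝ) = 3/2^2 by norm_num, Real.log_div (by norm_num) (by norm_num), Real.log_pow]
  push_cast; ring

private lemma log_gamma_2 : Real.log (Real.Gamma 2) = 0 := by
  rw [Real.Gamma_two, Real.log_one]

private lemma log_gamma_3 : Real.log (Real.Gamma 3) = Real.log 2 := by
  rw [show (3:ℝ) = 2 + 1 by norm_num, Real.Gamma_add_one (by norm_num), Real.Gamma_two, mul_one]

/-! Secant lower bounds for `log ∘ Gamma` from convexity. -/

private lemma gamma_lb_A {t : ℝ} (ht : 2 ≤ t) :
    (2 * Real.log 2 - Real.log π) * (t - 2) ≤ Real.log (Real.Gamma t) := by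
  rcases eq_or_lt_of_le ht with h | h
  · rw [← h]; simp [log_gamma_2]
  · have hc := Real.convexOn_log_Gamma.slope_mono_adjacent
      (x := 3/2) (y := 2) (z := t)
      (by norm_num : (3/2:ℝ) ∈ Set.Ioi (0:ℝ)) (by simp; linarith) (by norm_num) h
    simp only [Function.comp_apply] at hc
    rw [log_gamma_32, log_gamma_2] at hc
    have h2 : 0 < t - 2 := by linarith
    rw [div_le_div_iff₀ (by norm_num) h2] at hc
    nlinarith [hc]

private lemma gamma_lb_B {t : ℝ} (ht0 : 0 < t) (ht : t ≤ 5/2) :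
    Real.log 3 + (1/2) * Real.log π - 2 * Real.log 2
      - (6 * Real.log 2 - 2 * Real.log 3 - Real.log π) * (5/2 - t)
      ≤ Real.log (Real.Gamma t) := by
  rcases eq_or_lt_of_le ht with h | h
  · subst h; rw [log_gamma_52]; ring_nf; exact le_rfl
  · have hc := Real.convexOn_log_Gamma.slope_mono_adjacent
      (x := t) (y := 5/2) (z := 3)
      (by simpa using ht0) (by norm_num : (3:ℝ) ∈ Set.Ioi (0:ℝ)) h (by norm_num)
    simp only [Function.comp_apply] at hc
    rw [log_gamma_52, log_gamma_3] at hc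
    have h2 : 0 < 5/2 - t := by linarith
    rw [div_le_div_iff₀ h2 (by norm_num)] at hc
    nlinarith [hc]

private lemma gamma_lb_C {t : ℝ} (ht : 5/2 ≤ t) :
    Real.log 3 + (1/2) * Real.log π - 2 * Real.log 2
      + (2 * Real.log 3 + Real.log π - 4 * Real.log 2) * (t - 5/2)
      ≤ Real.log (Real.Gamma t) := by
  rcases eq_or_lt_of_le ht with h | h
  · rw [← h, log_gamma_52]; ring_nf; exact le_rfl
  · have hc := Real.convexOn_log_Gamma.slope_mono_adjacent
      (x := 2) (y := 5/2) (z := t)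
      (by norm_num : (2:ℝ) ∈ Set.Ioi (0:ℝ)) (by simp; linarith) (by norm_num) h
    simp only [Function.comp_apply] at hc
    rw [log_gamma_52, log_gamma_2] at hc
    have h2 : 0 < t - 5/2 := by linarith
    rw [div_le_div_iff₀ (by norm_num) h2] at hc
    nlinarith [hc]

/-! The main quantity. -/

private def P (x : ℝ) : Prop :=
  x/2 * (Real.log (x+1) + Real.log (x+2)) - x ≤ Real.log (Real.Gamma (x+1))

set_option maxHeartbeats 1000000 in
private lemma base_case {x : ℝ} (h1 : 1 ≤ x) (h2 : x ≤ 2) : P x := by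
  unfold P
  have hx1 : (0:ℝ) < x + 1 := by linarith
  have hx2 : (0:ℝ) < x + 2 := by linarith
  have hx0 : (0:ℝ) ≤ x/2 := by linarith
  have h2l' : (0.6931471803:ℝ) < Real.log 2 := Real.log_two_gt_d9
  have h2r' : Real.log 2 < 0.6931471808 := Real.log_two_lt_d9
  obtain ⟨h3l, h3r⟩ := l3_bounds
  obtain ⟨hπl, hπr⟩ := lpi_bounds
  rcases le_or_gt x (5/4) with hA | hA
  · -- region A : x ∈ [1, 5/4]
    have hg := gamma_lb_A (t := x + 1) (by linarith)
    have t1 : Real.log (x+1) ≤ Real.log (17/8) + ((x+1) - 17/8)/(17/8) :=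
      log_tangent (by norm_num) hx1
    have t2 : Real.log (x+2) ≤ Real.log (25/8) + ((x+2) - 25/8)/(25/8) :=
      log_tangent (by norm_num) hx2
    have hm : x/2 * (Real.log (x+1) + Real.log (x+2)) ≤
        x/2 * ((Real.log (17/8) + ((x+1) - 17/8)/(17/8)) +
               (Real.log (25/8) + ((x+2) - 25/8)/(25/8))) :=
      mul_le_mul_of_nonneg_left (by linarith) hx0
    obtain ⟨u1, u2⟩ := l178_bounds
    obtain ⟨v1, v2⟩ := l258_bounds
    have b1 : x/2 * Real.log (17/8 : ℝ) ≤ x/2 * 0.7537814 :=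
      mul_le_mul_of_nonneg_left u2 hx0
    have b2 : x/2 * Real.log (25/8 : ℝ) ≤ x/2 * 1.1395012 :=
      mul_le_mul_of_nonneg_left v2 hx0
    have b3 : (0.2414962:ℝ) * (x + 1 - 2) ≤ (2 * Real.log 2 - Real.log π) * (x + 1 - 2) :=
      mul_le_mul_of_nonneg_right (by nlinarith) (by linarith)
    nlinarith [hg, hm, b1, b2, b3, mul_nonneg (sub_nonneg.2 h1) (sub_nonneg.2 hA),
      sq_nonneg (x - 1)]
  · rcases le_or_gt x (3/2) with hB | hB
    · -- region B : x ∈ [5/4, 3/2]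
      have hg := gamma_lb_B (t := x + 1) (by linarith) (by linarith)
      have t1 : Real.log (x+1) ≤ Real.log (19/8) + ((x+1) - 19/8)/(19/8) :=
        log_tangent (by norm_num) hx1
      have t2 : Real.log (x+2) ≤ Real.log (27/8) + ((x+2) - 27/8)/(27/8) :=
        log_tangent (by norm_num) hx2
      have hm : x/2 * (Real.log (x+1) + Real.log (x+2)) ≤
          x/2 * ((Real.log (19/8) + ((x+1) - 19/8)/(19/8)) +
                 (Real.log (27/8) + ((x+2) - 27/8)/(27/8))) :=
        mul_le_mul_of_nonneg_left (by linarith) hx0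
      obtain ⟨u1, u2⟩ := l198_bounds
      obtain ⟨v1, v2⟩ := l278_bounds
      have b1 : x/2 * Real.log (19/8 : ℝ) ≤ x/2 * 0.8651332 :=
        mul_le_mul_of_nonneg_left u2 hx0
      have b2 : x/2 * Real.log (27/8 : ℝ) ≤ x/2 * 1.2165898 :=
        mul_le_mul_of_nonneg_left v2 hx0
      have hs : (0:ℝ) ≤ 3/2 - x := by linarith
      have b3 : (6 * Real.log 2 - 2 * Real.log 3 - Real.log π) * (5/2 - (x+1))
          ≤ (0.8172543:ℝ) * (3/2 - x) := by
        have : (5/2 : ℝ) - (x+1) = 3/2 - x := by ring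
        rw [this]
        exact mul_le_mul_of_nonneg_right (by nlinarith) hs
      nlinarith [hg, hm, b1, b2, b3,
        mul_nonneg (by linarith : (0:ℝ) ≤ x - 5/4) hs]
    · -- region C : x ∈ [3/2, 2]
      have hg := gamma_lb_C (t := x + 1) (by linarith)
      have t1 : Real.log (x+1) ≤ Real.log (11/4) + ((x+1) - 11/4)/(11/4) :=
        log_tangent (by norm_num) hx1
      have t2 : Real.log (x+2) ≤ Real.log (15/4) + ((x+2) - 15/4)/(15/4) :=
        log_tangent (by norm_num) hx2
      have hm : x/2 * (Real.log (x+1) + Real.log (x+2)) ≤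
          x/2 * ((Real.log (11/4) + ((x+1) - 11/4)/(11/4)) +
                 (Real.log (15/4) + ((x+2) - 15/4)/(15/4))) :=
        mul_le_mul_of_nonneg_left (by linarith) hx0
      obtain ⟨u1, u2⟩ := l114_bounds
      obtain ⟨v1, v2⟩ := l154_bounds
      have b1 : x/2 * Real.log (11/4 : ℝ) ≤ x/2 * 1.0117313 :=
        mul_le_mul_of_nonneg_left u2 hx0
      have b2 : x/2 * Real.log (15/4 : ℝ) ≤ x/2 * 1.3217762 :=
        mul_le_mul_of_nonneg_left v2 hx0
      have hs : (0:ℝ) ≤ x - 3/2 := by linarith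
      have b3 : (0.5690401:ℝ) * (x - 3/2)
          ≤ (2 * Real.log 3 + Real.log π - 4 * Real.log 2) * ((x+1) - 5/2) := by
        have e : (x+1:ℝ) - 5/2 = x - 3/2 := by ring
        rw [e]
        exact mul_le_mul_of_nonneg_right (by nlinarith) hs
      nlinarith [hg, hm, b1, b2, b3,
        mul_nonneg hs (by linarith : (0:ℝ) ≤ 2 - x)]

private lemma step_case {x : ℝ} (hx : 1 ≤ x) (h : P x) : P (x + 1) := by
  unfold P at h ⊢
  have hx1 : (0:ℝ) < x + 1 := by linarith
  have hG : Real.Gamma (x + 1 + 1) = (x + 1) * Real.Gamma (x + 1) :=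
    Real.Gamma_add_one (by linarith)
  rw [hG, Real.log_mul (by linarith) (Real.Gamma_pos_of_pos (by linarith)).ne']
  set u : ℝ := 1/(x+1) with hu_def
  have hu0 : 0 < u := by positivity
  have hu2 : u ≤ 1/2 := by rw [hu_def]; rw [div_le_div_iff₀ hx1 (by norm_num)]; linarith
  have huu : u * (x + 1) = 1 := by rw [hu_def]; field_simp
  have e2' : Real.log (x + 2) = Real.log (x + 1) + Real.log (1 + u) := by
    have e : x + 2 = (x + 1) * (1 + u) := by
      have : (x + 1) * (1 + u) = x + 1 + (x + 1) * u := by ring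
      rw [this, mul_comm (x+1) u, huu]; ring
    rw [e, Real.log_mul (by linarith) (by linarith)]
  have e2 : Real.log (x + 1 + 1) = Real.log (x + 1) + Real.log (1 + u) := by
    rw [show x + 1 + 1 = x + 2 by ring, e2']
  have e3 : Real.log (x + 1 + 2) = Real.log (x + 1) + Real.log (1 + 2*u) := by
    have e : x + 1 + 2 = (x + 1) * (1 + 2*u) := by
      have : (x + 1) * (1 + 2*u) = x + 1 + 2 * (u * (x + 1)) := by ring
      rw [this, huu]; ring
    rw [e, Real.log_mul (by linarith) (by nlinarith)]
  have b1 : Real.log (1 + u) ≤ u := by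
    have := Real.log_le_sub_one_of_pos (show (0:ℝ) < 1 + u by linarith)
    linarith
  have b2 : Real.log (1 + 2*u) ≤ 2*u - u^2 := by
    have ht : (0:ℝ) ≤ 2*u - u^2 := by nlinarith
    have hq := Real.quadratic_le_exp_of_nonneg ht
    have h12 : 1 + 2*u ≤ Real.exp (2*u - u^2) := by nlinarith [hq]
    calc Real.log (1 + 2*u) ≤ Real.log (Real.exp (2*u - u^2)) :=
          Real.log_le_log (by positivity) h12
      _ = 2*u - u^2 := Real.log_exp _
  have b2' : (x+1)/2 * Real.log (1 + 2*u) ≤ (x+1)/2 * (2*u - u^2) :=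
    mul_le_mul_of_nonneg_left b2 (by linarith)
  have key : (x+1)/2 * (2*u - u^2) = 1 - u/2 := by
    have h1 : (x+1) * u = 1 := by linarith [huu, mul_comm u (x+1)]
    have h2 : (x+1) * u^2 = u := by nlinarith [huu]
    nlinarith [h1, h2]
  rw [e2, e3]
  rw [e2'] at h
  nlinarith [h, b1, b2', key]

private lemma main_ineq (x : ℝ) (hx : 1 ≤ x) : P x := by
  obtain ⟨n, hn⟩ := exists_nat_ge x
  induction n generalizing x with
  | zero => exact absurd (hx.trans hn) (by norm_num)
  | succ n ih =>
    rcases le_or_gt x 2 with h | h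
    · exact base_case hx h
    · have h1 : 1 ≤ x - 1 := by linarith
      have h2 : x - 1 ≤ n := by
        push_cast at hn ⊢
        linarith
      have := step_case h1 (ih (x-1) h1 h2)
      simpa using this

/-- For every real number `x ≥ 1`, `Γ(1+x)^(2/x) ≥ (1/e²)(x+1)(x+2)`. -/
theorem gamma_lower_bound_two (x : ℝ) (hx : 1 ≤ x) :
    Real.Gamma (1 + x) ^ (2 / x) ≥ (1 / Real.exp 1 ^ 2) * (x + 1) * (x + 2) := by
  have hx0 : (0:ℝ) < x := by linarith
  rw [show (1:ℝ) + x = x + 1 by ring]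
  have hG : 0 < Real.Gamma (x + 1) := Real.Gamma_pos_of_pos (by linarith)
  have hP := main_ineq x hx
  unfold P at hP
  have hRpos : (0:ℝ) < (1 / Real.exp 1 ^ 2) * (x + 1) * (x + 2) := by positivity
  rw [ge_iff_le, ← Real.log_le_log_iff hRpos (Real.rpow_pos_of_pos hG _)]
  rw [Real.log_rpow hG]
  have e : Real.log ((1 / Real.exp 1 ^ 2) * (x + 1) * (x + 2))
      = -2 + Real.log (x+1) + Real.log (x+2) := by
    rw [Real.log_mul (by positivity) (by linarith), Real.log_mul (by positivity) (by linarith),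
      one_div, Real.log_inv, Real.log_pow, Real.log_exp]
    push_cast; ring
  rw [e]
  have h2 : 2 / x * (x/2 * (Real.log (x+1) + Real.log (x+2)) - x)
      ≤ 2 / x * Real.log (Real.Gamma (x + 1)) :=
    mul_le_mul_of_nonneg_left hP (by positivity)
  have e2 : 2 / x * (x/2 * (Real.log (x+1) + Real.log (x+2)) - x)
      = Real.log (x+1) + Real.log (x+2) - 2 := by
    field_simp
  rw [e2] at h2
  linarith
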